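/- Fix a finite schema and a finite constraint set Σ, and let k ∈ ℕ. There exists p_k ∈ ℕ such that if the monitor graph of a finite chase sequence S contains a directed path of length p_k, then S is k-cyclic. -/

import Mathlib

set_option maxHeartbeats 1000000

namespace StopChase

/-! ## Basic objects: values, terms, relation symbols, atoms, facts -/

/-- Database values: constants from `Δ` and labeled nulls from `Δ_null`. -/
inductive Val : Type
  | const : ℕ → Val
  | null : ℕ → Val
  deriving DecidableEq

/-- `v` is a labeled null. -/
def Val.isNull : Val → Prop
  | .null _ => True
  | .const _ => False

/-- Terms: variables or constant parameters. -/
inductive Term : Type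
  | var : ℕ → Term
  | const : ℕ → Term
  deriving DecidableEq

/-- Relation symbols of a universal schema: a name together with an arity. -/
abbrev RelSym : Type := ℕ × ℕ

/-- The arity of a relation symbol. -/
def RelSym.arity (R : RelSym) : ℕ := R.2

/-- A position `R^i` of a relation symbol. -/
abbrev Pos : Type := RelSym × ℕ

/-- An atom: a relation symbol applied to a list of terms. -/
structure Atom : Type where
  rel : RelSym
  args : List Term
  deriving DecidableEq

/-- Well-formedness of an atom: the number of arguments matches the arity. -/
def Atom.wf (A : Atom) : Prop := A.args.length = A.rel.arity

/-- A fact: a relation symbol applied to a list of values. -/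
structure Fact : Type where
  rel : RelSym
  args : List Val
  deriving DecidableEq

/-- Well-formedness of a fact. -/
def Fact.wf (F : Fact) : Prop := F.args.length = F.rel.arity

/-- The variables occurring in an atom. -/
def Atom.vars (A : Atom) : Set ℕ := {v | Term.var v ∈ A.args}

/-- The variables occurring in a list of atoms. -/
def varsOf (L : List Atom) : Set ℕ := {v | ∃ A ∈ L, v ∈ A.vars}

/-- Variable `v` occurs at position `π` in the list of atoms `L`. -/
def occursAt (L : List Atom) (v : ℕ) (π : Pos) : Prop :=
  ∃ A ∈ L, A.rel = π.1 ∧ A.args[π.2]? = some (Term.var v)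

/-- The set of positions of a list of atoms. -/
def posOfAtoms (L : List Atom) : Set Pos :=
  {π | ∃ A ∈ L, A.rel = π.1 ∧ π.2 < A.args.length}

/-! ## Constraints: TGDs and EGDs -/

/-- A tuple generating dependency `∀ x̄ (φ(x̄) → ∃ ȳ ψ(x̄,ȳ))`, given by its body `φ`
and head `ψ`.  The universally quantified variables are those occurring in the body;
head variables not occurring in the body are (implicitly) existentially quantified. -/
structure TGD : Type where
  body : List Atom
  head : List Atom
  deriving DecidableEq

/-- Well-formedness of a TGD: the head is nonempty and all atoms are well-formed. -/
def TGD.wf (t : TGD) : Prop :=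
  t.head ≠ [] ∧ (∀ A ∈ t.body, A.wf) ∧ (∀ A ∈ t.head, A.wf)

/-- The universally quantified variables of a TGD. -/
def TGD.uniVars (t : TGD) : Set ℕ := varsOf t.body

/-- The existentially quantified variables of a TGD. -/
def TGD.exVars (t : TGD) : Set ℕ := varsOf t.head \ varsOf t.body

/-- An equality generating dependency `∀ x̄ (φ(x̄) → x_i = x_j)`. -/
structure EGD : Type where
  body : List Atom
  lhs : ℕ
  rhs : ℕ
  deriving DecidableEq

/-- Well-formedness of an EGD: nonempty well-formed body and both equated
variables occur in the body. -/
def EGD.wf (e : EGD) : Prop :=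
  e.body ≠ [] ∧ (∀ A ∈ e.body, A.wf) ∧ e.lhs ∈ varsOf e.body ∧ e.rhs ∈ varsOf e.body

/-- A constraint is a TGD or an EGD. -/
inductive Constraint : Type
  | tgd : TGD → Constraint
  | egd : EGD → Constraint
  deriving DecidableEq

/-- Well-formedness of a constraint. -/
def Constraint.wf : Constraint → Prop
  | .tgd t => t.wf
  | .egd e => e.wf

/-- The body atoms of a constraint. -/
def Constraint.bodyAtoms : Constraint → List Atom
  | .tgd t => t.body
  | .egd e => e.body

/-- `pos(α)`: the set of positions occurring in the body of `α`. -/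
def Constraint.pos (α : Constraint) : Set Pos := posOfAtoms α.bodyAtoms

/-- `pos(Σ)`: the set of positions occurring in the bodies of constraints of `Σ`. -/
def posOf (S : Set Constraint) : Set Pos := ⋃ α ∈ S, α.pos

/-- The universally quantified variables occurring in the head of a constraint
(for an EGD, the two equated variables). -/
def Constraint.headUniVars : Constraint → Set ℕ
  | .tgd t => varsOf t.head ∩ varsOf t.body
  | .egd e => {e.lhs, e.rhs}

/-! ## Semantics -/

/-- Evaluation of a term under an assignment `ν : V → Δ ∪ Δ_null`. -/
def Term.eval (ν : ℕ → Val) : Term → Val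
  | .var v => ν v
  | .const c => Val.const c

/-- Instantiation of an atom to a fact. -/
def Atom.inst (ν : ℕ → Val) (A : Atom) : Fact := ⟨A.rel, A.args.map (Term.eval ν)⟩

/-- All atoms of `L`, instantiated by `ν`, hold in the instance `I`. -/
def bodyHolds (I : Set Fact) (L : List Atom) (ν : ℕ → Val) : Prop :=
  ∀ A ∈ L, A.inst ν ∈ I

/-- `I ⊨ α(ā)`: the constraint `α` holds in `I` under the assignment `ν` of its
universally quantified variables. -/
def Constraint.satAt : Constraint → Set Fact → (ℕ → Val) → Prop
  | .tgd t, I, ν => bodyHolds I t.body ν →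
      ∃ ν' : ℕ → Val, (∀ v ∈ varsOf t.body, ν' v = ν v) ∧ bodyHolds I t.head ν'
  | .egd e, I, ν => bodyHolds I e.body ν → ν e.lhs = ν e.rhs

/-- `I ⊨ α`. -/
def Constraint.holds (α : Constraint) (I : Set Fact) : Prop := ∀ ν, α.satAt I ν

/-- The active domain of an instance: the set of values occurring in it. -/
def adom (I : Set Fact) : Set Val := {v | ∃ F ∈ I, v ∈ F.args}

/-- Substitution of the value `a` by the value `b`. -/
def Val.subst (a b : Val) (v : Val) : Val := if v = a then b else v

/-- Substitution applied to a fact. -/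
def Fact.substF (a b : Val) (F : Fact) : Fact := ⟨F.rel, F.args.map (Val.subst a b)⟩

/-! ## Chase steps and chase sequences -/

/-- A chase step `I →_{α,ā} J`: the instance `I` violates `α(ā)` and `J` is
obtained from `I` by adding the head atoms instantiated with fresh labeled nulls
for the existentially quantified variables (TGDs), resp. by equating a labeled
null with another value (EGDs). -/
def Constraint.chaseStep (α : Constraint) (ν : ℕ → Val) (I J : Set Fact) : Prop :=
  ¬ α.satAt I ν ∧
  match α with
  | .tgd t =>
      ∃ ν' : ℕ → Val,
        (∀ v ∈ varsOf t.body, ν' v = ν v) ∧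
        (∀ v ∈ t.exVars, (ν' v).isNull ∧ ν' v ∉ adom I) ∧
        (∀ v ∈ t.exVars, ∀ w ∈ t.exVars, ν' v = ν' w → v = w) ∧
        J = I ∪ {F | ∃ A ∈ t.head, F = A.inst ν'}
  | .egd e =>
      ∃ a b : Val, a.isNull ∧ ({a, b} : Set Val) = {ν e.lhs, ν e.rhs} ∧
        J = Fact.substF a b '' I

/-- The data of a (finite or infinite) chase sequence: the instances, and
the constraint and assignment used at each step. -/
structure ChaseData : Type where
  inst : ℕ → Set Fact
  cns : ℕ → Constraint
  asg : ℕ → ℕ → Val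

/-- `D` is a chase sequence of length (at least) `r` with constraints from `S`. -/
def ChaseData.okUpTo (D : ChaseData) (S : Set Constraint) (r : ℕ) : Prop :=
  ∀ i < r, D.cns i ∈ S ∧ (D.cns i).chaseStep (D.asg i) (D.inst i) (D.inst (i+1))

/-- `D` is an infinite chase sequence with constraints from `S`. -/
def ChaseData.okAll (D : ChaseData) (S : Set Constraint) : Prop :=
  ∀ i, D.cns i ∈ S ∧ (D.cns i).chaseStep (D.asg i) (D.inst i) (D.inst (i+1))

/-- The nulls freshly introduced in the first `r` steps are globally fresh,
i.e. do not occur in any earlier instance of the sequence. -/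
def ChaseData.fresh (D : ChaseData) (r : ℕ) : Prop :=
  ∀ i < r, ∀ v, v.isNull → v ∈ adom (D.inst (i+1)) → v ∉ adom (D.inst i) →
    ∀ j ≤ i, v ∉ adom (D.inst j)

/-- Global freshness for an infinite sequence. -/
def ChaseData.freshAll (D : ChaseData) : Prop := ∀ r, D.fresh r

/-- The chase with `S` terminates on the instance `I`: there is no infinite
chase sequence starting from `I`. -/
def chaseTerminates (S : Set Constraint) (I : Set Fact) : Prop :=
  ¬ ∃ D : ChaseData, D.inst 0 = I ∧ D.okAll S

/-- `J` is a result of the chase of `I` with `S`: it is the final instance of a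
finite chase sequence starting from `I` and satisfies all constraints of `S`. -/
def ChaseResult (S : Set Constraint) (I J : Set Fact) : Prop :=
  ∃ (D : ChaseData) (r : ℕ), D.inst 0 = I ∧ D.okUpTo S r ∧ D.inst r = J ∧
    ∀ α ∈ S, α.holds J

/-- `α` is `(I,S)`-irrelevant: no chase sequence starting from `I` with `S`
contains a chase step applying `α`. -/
def Irrelevant (I : Set Fact) (S : Set Constraint) (α : Constraint) : Prop :=
  ¬ ∃ (D : ChaseData) (r : ℕ), D.inst 0 = I ∧ D.okUpTo S r ∧ ∃ i < r, D.cns i = α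

/-! ## Affected positions, propagation graph and safety -/

/-- The affected positions `aff(S)` of (the TGDs of) a constraint set `S`. -/
inductive Affected (S : Set Constraint) : Pos → Prop
  | ex (t : TGD) (y : ℕ) (π : Pos) :
      Constraint.tgd t ∈ S → y ∈ t.exVars → occursAt t.head y π → Affected S π
  | uni (t : TGD) (x : ℕ) (π : Pos) :
      Constraint.tgd t ∈ S → x ∈ t.uniVars → occursAt t.head x π →
      (∃ π', occursAt t.body x π') →
      (∀ π', occursAt t.body x π' → Affected S π') → Affected S π

/-- A (non-special) edge `π1 → π2` of the propagation graph `prop(S)`. -/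
def propEdge (S : Set Constraint) (π1 π2 : Pos) : Prop :=
  ∃ t, Constraint.tgd t ∈ S ∧ ∃ x ∈ t.uniVars, x ∈ varsOf t.head ∧
    occursAt t.body x π1 ∧ (∀ π, occursAt t.body x π → Affected S π) ∧
    occursAt t.head x π2

/-- A special edge `π1 →* π2` of the propagation graph `prop(S)`. -/
def propSpecialEdge (S : Set Constraint) (π1 π2 : Pos) : Prop :=
  ∃ t, Constraint.tgd t ∈ S ∧ ∃ x ∈ t.uniVars, x ∈ varsOf t.head ∧
    occursAt t.body x π1 ∧ (∀ π, occursAt t.body x π → Affected S π) ∧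
    ∃ y ∈ t.exVars, occursAt t.head y π2

/-- Any edge of the propagation graph. -/
def propAnyEdge (S : Set Constraint) (π1 π2 : Pos) : Prop :=
  propEdge S π1 π2 ∨ propSpecialEdge S π1 π2

/-- `S` is safe: the propagation graph `prop(S)` has no cycle going through a
special edge. -/
def IsSafe (S : Set Constraint) : Prop :=
  ¬ ∃ π1 π2, propSpecialEdge S π1 π2 ∧ Relation.ReflTransGen (propAnyEdge S) π2 π1

/-! ## Restriction systems -/

/-- The fact `F` has a labeled null at position `π`. -/
def Fact.nullAt (F : Fact) (π : Pos) : Prop :=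
  F.rel = π.1 ∧ ∃ v, F.args[π.2]? = some v ∧ v.isNull

/-- The instance `I` contains labeled nulls only in positions from `P`. -/
def nullsOnlyIn (I : Set Fact) (P : Set Pos) : Prop :=
  ∀ F ∈ I, ∀ π : Pos, F.nullAt π → π ∈ P

/-- `α ≺_P β`. -/
def prec (P : Set Pos) (α β : Constraint) : Prop :=
  ∃ (I J : Set Fact) (a b : ℕ → Val),
    I.Finite ∧ nullsOnlyIn I P ∧
    ¬ α.satAt I a ∧ β.satAt I b ∧
    α.chaseStep a I J ∧ ¬ β.satAt J b ∧
    ∃ v ∈ β.headUniVars, (b v).isNull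

/-- `aff-cl(t,P)` for a TGD `t` and a set of positions `P`. -/
def affCl (t : TGD) (P : Set Pos) : Set Pos :=
  {π | π ∈ posOfAtoms t.head ∧
    ((∀ x ∈ t.uniVars, occursAt t.head x π → ∀ π', occursAt t.body x π' → π' ∈ P) ∨
     (∃ y ∈ t.exVars, occursAt t.head y π))}

/-- A restriction system: a directed graph on constraints together with a
position-set labelling. -/
structure RestrSys : Type where
  E : Constraint → Constraint → Prop
  f : Constraint → Set Pos

/-- The defining closure conditions of a restriction system for `S`. -/
def RestrSys.valid (S : Set Constraint) (R : RestrSys) : Prop :=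
  (∀ t : TGD, ∀ β, Constraint.tgd t ∈ S → β ∈ S → R.E (.tgd t) β →
      affCl t (R.f (.tgd t)) ∩ β.pos ⊆ R.f β) ∧
  (∀ e : EGD, ∀ β, Constraint.egd e ∈ S → β ∈ S → R.E (.egd e) β →
      R.f (.egd e) ∩ β.pos ⊆ R.f β) ∧
  (∀ α β, α ∈ S → β ∈ S → prec (R.f α) α β → R.E α β)

/-- Pointwise inclusion of restriction systems. -/
def RestrSys.le (R1 R2 : RestrSys) : Prop :=
  (∀ a b, R1.E a b → R2.E a b) ∧ (∀ a, R1.f a ⊆ R2.f a)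

/-- The minimal restriction system of `S` (obtained from the empty system by
repeatedly enforcing the closure conditions, extending only as required). -/
def IsMinimalRS (S : Set Constraint) (R : RestrSys) : Prop :=
  R.valid S ∧ ∀ R', R'.valid S → R.le R'

/-- The edge relation of a restriction system, restricted to `S`. -/
def edgeOn (S : Set Constraint) (E : Constraint → Constraint → Prop)
    (a b : Constraint) : Prop :=
  a ∈ S ∧ b ∈ S ∧ E a b

/-- The strongly connected component of `α`. -/
def sccOf (S : Set Constraint) (E : Constraint → Constraint → Prop)
    (α : Constraint) : Set Constraint :=
  {β | β ∈ S ∧ Relation.ReflTransGen (edgeOn S E) α β ∧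
    Relation.ReflTransGen (edgeOn S E) β α}

/-- The (nontrivial) strongly connected components of the graph `(S,E)`,
i.e. those containing a cycle. -/
def SCCs (S : Set Constraint) (E : Constraint → Constraint → Prop) :
    Set (Set Constraint) :=
  {C | ∃ α ∈ S, Relation.TransGen (edgeOn S E) α α ∧ C = sccOf S E α}

/-- `PartMem S S'` holds iff `S' ∈ part(S)`, where `part` is the recursive
algorithm computing strongly connected components of minimal restriction
systems. -/
inductive PartMem : Set Constraint → Set Constraint → Prop
  | base (S : Set Constraint) (R : RestrSys) :
      IsMinimalRS S R → SCCs S R.E = {S} → PartMem S S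
  | step (S : Set Constraint) (R : RestrSys) (C S' : Set Constraint) :
      IsMinimalRS S R → SCCs S R.E ≠ {S} → C ∈ SCCs S R.E →
      PartMem C S' → PartMem S S'

/-- `S` is inductively restricted: every `S' ∈ part(S)` is safe. -/
def InductivelyRestricted (S : Set Constraint) : Prop :=
  ∀ S', PartMem S S' → IsSafe S'

/-- `S` is safely restricted: every strongly connected component of its
minimal restriction system is safe. -/
def SafelyRestricted (S : Set Constraint) : Prop :=
  ∀ R, IsMinimalRS S R → ∀ C ∈ SCCs S R.E, IsSafe C

/-! ## Monitor graphs -/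

/-- A node of a monitor graph: a value together with a set of positions. -/
abbrev MNode : Type := Val × Set Pos

/-- A labeled edge of a monitor graph. -/
structure MEdge : Type where
  src : MNode
  cns : Constraint
  lbl : Set Pos
  tgt : MNode

/-- The labeled nulls newly introduced by a chase step from `I` to `J`. -/
def newNulls (I J : Set Fact) : Set Val := {v | v.isNull ∧ v ∈ adom J ∧ v ∉ adom I}

/-- The set of positions at which the value `v` occurs in the instance `I`. -/
def posOfVal (I : Set Fact) (v : Val) : Set Pos :=
  {π | ∃ F ∈ I, F.rel = π.1 ∧ F.args[π.2]? = some v}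

/-- The set of positions of the instantiated body `body(α(ā))` in which the
value `v` occurs. -/
def instBodyPos (α : Constraint) (ν : ℕ → Val) (v : Val) : Set Pos :=
  {π | ∃ A ∈ α.bodyAtoms, A.rel = π.1 ∧ (A.args.map (Term.eval ν))[π.2]? = some v}

/-- The monitor-graph nodes created by the `i`-th chase step. -/
def ChaseData.mgNew (D : ChaseData) (i : ℕ) : Set MNode :=
  {p | ∃ n ∈ newNulls (D.inst i) (D.inst (i+1)), p = (n, posOfVal (D.inst (i+1)) n)}

/-- The nodes of the monitor graph of the length-`i` prefix of `D`. -/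
def ChaseData.mgV (D : ChaseData) : ℕ → Set MNode
  | 0 => ∅
  | i+1 => D.mgV i ∪ D.mgNew i

/-- The edges of the monitor graph of the length-`i` prefix of `D`. -/
def ChaseData.mgE (D : ChaseData) : ℕ → Set MEdge
  | 0 => ∅
  | i+1 => D.mgE i ∪
      {e | e.src ∈ D.mgV i ∧ e.tgt ∈ D.mgNew i ∧ e.cns = D.cns i ∧
           e.lbl = instBodyPos (D.cns i) (D.asg i) e.src.1}

/-- A path in a monitor graph: a list of edges of the graph in which consecutive
edges are chained (`p_{5,6}(e_i) = p_{1,2}(e_{i+1})`). -/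
def IsPath (E : Set MEdge) (l : List MEdge) : Prop :=
  (∀ e ∈ l, e ∈ E) ∧ l.Chain' (fun a b => a.tgt = b.src)

/-- The projection `p_{2,3,4,6}` of an edge. -/
def MEdge.sig (e : MEdge) : Set Pos × Constraint × Set Pos × Set Pos :=
  (e.src.2, e.cns, e.lbl, e.tgt.2)

/-- A monitor graph with edge set `E` is `k`-cyclic: some path contains `k`
pairwise distinct edges, in order, that agree on the projection `p_{2,3,4,6}`. -/
def kCyclic (E : Set MEdge) (k : ℕ) : Prop :=
  ∃ l es : List MEdge, IsPath E l ∧ es.Sublist l ∧ es.length = k ∧ es.Nodup ∧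
    es.Chain' (fun a b => a.sig = b.sig)

/-- `DepthLe E v d`: the depth of the node `v` in the monitor graph with edge
set `E` is at most `d` (depth `0` for nodes without predecessors, and `1` plus
the maximal depth of the predecessors otherwise). -/
inductive DepthLe (E : Set MEdge) : MNode → ℕ → Prop
  | intro (v : MNode) (d : ℕ) (f : MEdge → ℕ) :
      (∀ e ∈ E, e.tgt = v → f e < d) →
      (∀ e, e ∈ E → e.tgt = v → DepthLe E e.src (f e)) → DepthLe E v d

/-- The node `v` has depth exactly `d`. -/
def HasDepth (E : Set MEdge) (v : MNode) (d : ℕ) : Prop :=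
  DepthLe E v d ∧ ∀ d' < d, ¬ DepthLe E v d'


/-! ### Auxiliary definitions and lemmas for Statement 15 -/

/-- The head atoms of a constraint (empty for an EGD). -/
def Constraint.headAtoms : Constraint → List Atom
  | .tgd t => t.head
  | .egd _ => []

lemma posOfAtoms_finite (L : List Atom) : (posOfAtoms L).Finite := by
  have hsub : posOfAtoms L ⊆
      ⋃ A ∈ {A | A ∈ L}, (({A.rel} : Set RelSym) ×ˢ Set.Iio A.args.length : Set Pos) := by
    rintro π ⟨A, hA, h1, h2⟩
    exact Set.mem_biUnion hA ⟨by simpa using h1.symm, h2⟩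
  exact Set.Finite.subset
    (Set.Finite.biUnion (List.finite_toSet L)
      (fun A _ => (Set.finite_singleton _).prod (Set.finite_Iio _))) hsub

lemma val_mem_adom_of_bodyHolds {I : Set Fact} {L : List Atom} {ν : ℕ → Val} {v : ℕ}
    (hb : bodyHolds I L ν) (hv : v ∈ varsOf L) : ν v ∈ adom I := by
  obtain ⟨A, hA, hvA⟩ := hv
  refine ⟨A.inst ν, hb A hA, ?_⟩
  show ν v ∈ (A.args.map (Term.eval ν))
  exact List.mem_map.mpr ⟨Term.var v, hvA, rfl⟩

lemma newNulls_egd_empty {e : EGD} {ν : ℕ → Val} {I J : Set Fact}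
    (hwf : (Constraint.egd e).wf)
    (hst : (Constraint.egd e).chaseStep ν I J) : newNulls I J = ∅ := by
  obtain ⟨hns, a, b, hna, hab, hJ⟩ := hst
  simp only [Constraint.satAt] at hns
  push_neg at hns
  obtain ⟨hbody, -⟩ := hns
  have hbI : b ∈ adom I := by
    have hb : b ∈ ({ν e.lhs, ν e.rhs} : Set Val) := by
      rw [← hab]; exact Set.mem_insert_iff.mpr (Or.inr rfl)
    rcases hb with hb | hb
    · exact hb ▸ val_mem_adom_of_bodyHolds hbody hwf.2.2.1
    · exact hb ▸ val_mem_adom_of_bodyHolds hbody hwf.2.2.2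
  have hsub : adom J ⊆ adom I := by
    rintro v ⟨F', hF', hv⟩
    rw [hJ] at hF'
    obtain ⟨F, hF, rfl⟩ := hF'
    obtain ⟨w, hw, rfl⟩ := List.mem_map.mp hv
    by_cases hwa : w = a
    · simpa [Val.subst, hwa] using hbI
    · simpa [Val.subst, hwa] using ⟨F, hF, hw⟩
  ext v
  simp only [newNulls, Set.mem_setOf_eq, Set.mem_empty_iff_false, iff_false, not_and]
  intro _ hvJ hvI
  exact hvI (hsub hvJ)

lemma instBodyPos_subset (α : Constraint) (ν : ℕ → Val) (v : Val) :
    instBodyPos α ν v ⊆ posOfAtoms α.bodyAtoms := by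
  rintro π ⟨A, hA, h1, h2⟩
  refine ⟨A, hA, h1, ?_⟩
  have := (List.getElem?_eq_some_iff.mp h2).1
  simpa using this

/-- The edges created by the `i`-th chase step. -/
def newE (D : ChaseData) (i : ℕ) : Set MEdge :=
  {e | e.src ∈ D.mgV i ∧ e.tgt ∈ D.mgNew i ∧ e.cns = D.cns i ∧
       e.lbl = instBodyPos (D.cns i) (D.asg i) e.src.1}

lemma mem_mgE_iff {D : ChaseData} {r : ℕ} {e : MEdge} :
    e ∈ D.mgE r ↔ ∃ i < r, e ∈ newE D i := by
  induction r with
  | zero => simp [ChaseData.mgE]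
  | succ n ih =>
    show e ∈ D.mgE n ∪ _ ↔ _
    rw [Set.mem_union, ih]
    constructor
    · rintro (⟨i, hi, h⟩ | h)
      · exact ⟨i, Nat.lt_succ_of_lt hi, h⟩
      · exact ⟨n, Nat.lt_succ_self n, h⟩
    · rintro ⟨i, hi, h⟩
      rcases Nat.lt_succ_iff_lt_or_eq.mp hi with hi | rfl
      · exact Or.inl ⟨i, hi, h⟩
      · exact Or.inr h

lemma mem_mgV {D : ChaseData} {r : ℕ} {v : MNode} (h : v ∈ D.mgV r) :
    ∃ i < r, v ∈ D.mgNew i := by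
  induction r with
  | zero => cases h
  | succ n ih =>
    rcases h with h | h
    · obtain ⟨i, hi, h⟩ := ih h
      exact ⟨i, Nat.lt_succ_of_lt hi, h⟩
    · exact ⟨n, Nat.lt_succ_self n, h⟩

lemma newNulls_step_unique {D : ChaseData} {r i j : ℕ} (hf : D.fresh r)
    (hi : i < r) (hj : j < r) {n : Val}
    (h1 : n ∈ newNulls (D.inst i) (D.inst (i+1)))
    (h2 : n ∈ newNulls (D.inst j) (D.inst (j+1))) : i = j := by
  rcases lt_trichotomy i j with h | h | h
  · exact absurd h1.2.1 (hf j hj n h2.1 h2.2.1 h2.2.2 (i+1) h)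
  · exact h
  · exact absurd h2.2.1 (hf i hi n h1.1 h1.2.1 h1.2.2 (j+1) h)

lemma mgNew_fst {D : ChaseData} {i : ℕ} {p : MNode} (hp : p ∈ D.mgNew i) :
    p.1 ∈ newNulls (D.inst i) (D.inst (i+1)) := by
  obtain ⟨n, hn, rfl⟩ := hp; exact hn

lemma step_lt {D : ChaseData} {r i j : ℕ} (hf : D.fresh r) (hi : i < r) (hj : j < r)
    {e e' : MEdge} (he : e ∈ newE D i) (he' : e' ∈ newE D j)
    (h : e.tgt = e'.src) : i < j := by
  obtain ⟨i', hi', hsrc⟩ := mem_mgV he'.1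
  have h1 := mgNew_fst he.2.1
  have h2 := mgNew_fst hsrc
  rw [h] at h1
  have := newNulls_step_unique hf hi (hi'.trans hj) h1 h2
  omega

lemma tgt_snd_subset {D : ChaseData} {Sg : Set Constraint} {r i : ℕ}
    (hok : D.okUpTo Sg r) (hwf : ∀ α ∈ Sg, α.wf) (hi : i < r) {p : MNode}
    (hp : p ∈ D.mgNew i) :
    ∃ t : TGD, Constraint.tgd t ∈ Sg ∧ p.2 ⊆ posOfAtoms t.head := by
  obtain ⟨hmem, hstep⟩ := hok i hi
  obtain ⟨n, hn, rfl⟩ := hp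
  rcases hcns : D.cns i with t | eg
  · rw [hcns] at hstep
    obtain ⟨-, ν', hb, hex, hinj, hJ⟩ := hstep
    refine ⟨t, hcns ▸ hmem, ?_⟩
    rintro π ⟨F, hF, hrel, hget⟩
    rw [hJ] at hF
    rcases hF with hF | ⟨A, hA, rfl⟩
    · exact absurd ⟨F, hF, List.mem_of_getElem? hget⟩ hn.2.2
    · refine ⟨A, hA, hrel, ?_⟩
      have := (List.getElem?_eq_some_iff.mp hget).1
      simpa [Atom.inst] using this
  · rw [hcns] at hstep
    have := newNulls_egd_empty (hcns ▸ hwf _ hmem) hstep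
    rw [this] at hn
    exact absurd hn (Set.notMem_empty n)

lemma length_eq_sum_countP {α β : Type*} [DecidableEq β] (t : Finset β) (f : α → β) :
    ∀ (l : List α), (∀ a ∈ l, f a ∈ t) →
      l.length = ∑ y ∈ t, l.countP (fun a => decide (f a = y))
  | [], _ => by simp
  | a :: l, h => by
    rw [List.length_cons,
      length_eq_sum_countP t f l (fun x hx => h x (List.mem_cons_of_mem a hx))]
    simp only [List.countP_cons]
    rw [Finset.sum_add_distrib]
    have h1 : ∑ y ∈ t, (if (decide (f a = y)) = true then 1 else 0) = 1 := by
      simp only [decide_eq_true_eq]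
      rw [Finset.sum_ite_eq t (f a) (fun _ => 1)]
      simp [h a List.mem_cons_self]
    omega

lemma list_pigeonhole {α β : Type*} [DecidableEq β] (t : Finset β) (f : α → β)
    (l : List α) (n : ℕ) (hmem : ∀ a ∈ l, f a ∈ t) (hlen : t.card * n < l.length) :
    ∃ y, n < l.countP (fun a => decide (f a = y)) := by
  by_contra hcon
  push_neg at hcon
  have h1 := length_eq_sum_countP t f l hmem
  have h2 : ∑ y ∈ t, l.countP (fun a => decide (f a = y)) ≤ t.card * n := by
    have := Finset.sum_le_card_nsmul t (fun y => l.countP (fun a => decide (f a = y))) n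
      (fun y _ => hcon y)
    rwa [smul_eq_mul] at this
  omega

lemma chain'_sig_of_const : ∀ (l : List MEdge) (s : Set Pos × Constraint × Set Pos × Set Pos),
    (∀ e ∈ l, e.sig = s) → l.Chain' fun a b => a.sig = b.sig
  | [], _, _ => List.isChain_nil
  | [a], _, _ => List.isChain_singleton a
  | a :: b :: l, s, h => by
    unfold List.Chain'
    rw [List.isChain_cons_cons]
    exact ⟨(h a (by simp)).trans (h b (by simp)).symm,
      chain'_sig_of_const (b :: l) s (fun e he => h e (List.mem_cons_of_mem a he))⟩

lemma chain'_imp_of_mem {α : Type*} {R S : α → α → Prop} :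
    ∀ {l : List α}, l.Chain' R → (∀ a ∈ l, ∀ b ∈ l, R a b → S a b) → l.Chain' S
  | [], _, _ => List.isChain_nil
  | [a], _, _ => List.isChain_singleton a
  | a :: b :: l, h, hm => by
    unfold List.Chain' at h ⊢
    rw [List.isChain_cons_cons] at h ⊢
    exact ⟨hm a (by simp) b (by simp) h.1,
      chain'_imp_of_mem h.2
        (fun x hx y hy => hm x (List.mem_cons_of_mem a hx) y (List.mem_cons_of_mem a hy))⟩


/-- Proposition 5. For a fixed finite constraint set `Σ` and
`k ∈ ℕ` there exists `p_k ∈ ℕ` such that if the monitor graph of a finite chase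
sequence contains a directed path of length `p_k`, then the sequence is `k`-cyclic. -/
theorem long_path_implies_kCyclic (Sg : Set Constraint) (hfin : Sg.Finite)
    (hwf : ∀ α ∈ Sg, α.wf) (k : ℕ) :
    ∃ p : ℕ, ∀ (D : ChaseData) (r : ℕ), (D.inst 0).Finite →
      D.okUpTo Sg r → D.fresh r →
      (∃ l : List MEdge, IsPath (D.mgE r) l ∧ l.length = p) →
      kCyclic (D.mgE r) k := by
  classical
  set B : Set Pos := ⋃ α ∈ Sg, (posOfAtoms α.bodyAtoms ∪ posOfAtoms α.headAtoms) with hB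
  have hBfin : B.Finite :=
    Set.Finite.biUnion hfin
      (fun α _ => (posOfAtoms_finite _).union (posOfAtoms_finite _))
  set T : Set (Set Pos × Constraint × Set Pos × Set Pos) :=
    {s | s ⊆ B} ×ˢ (Sg ×ˢ ({s | s ⊆ B} ×ˢ {s | s ⊆ B})) with hT
  have hTfin : T.Finite :=
    hBfin.finite_subsets.prod (hfin.prod (hBfin.finite_subsets.prod hBfin.finite_subsets))
  refine ⟨hTfin.toFinset.card * k + 1, ?_⟩
  rintro D r hI0 hok hfr ⟨l, hpath, hlen⟩
  -- every position set of a monitor-graph node lies inside B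
  have hnode : ∀ i < r, ∀ p : MNode, p ∈ D.mgNew i → p.2 ⊆ B := by
    intro i hi p hp
    obtain ⟨t, ht, hsub⟩ := tgt_snd_subset hok hwf hi hp
    refine hsub.trans ?_
    intro π hπ
    exact Set.mem_biUnion ht (Or.inr hπ)
  -- every edge of the monitor graph has its signature in T
  have hsig : ∀ e ∈ l, e.sig ∈ hTfin.toFinset := by
    intro e he
    rw [Set.Finite.mem_toFinset]
    obtain ⟨i, hi, hsrc, htgt, hcns, hlbl⟩ := mem_mgE_iff.mp (hpath.1 e he)
    obtain ⟨i', hi', hsrc'⟩ := mem_mgV hsrc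
    refine ⟨hnode i' (hi'.trans hi) _ hsrc', ?_, ?_, hnode i hi _ htgt⟩
    · show e.cns ∈ Sg
      rw [hcns]; exact (hok i hi).1
    show e.lbl ∈ {s | s ⊆ B}
    rw [hlbl]
    refine (instBodyPos_subset _ _ _).trans ?_
    intro π hπ
    exact Set.mem_biUnion (hcns ▸ (hok i hi).1) (Or.inl hπ)
  -- edges along the path are pairwise distinct
  have hst : ∀ e ∈ l, e ∈ newE D (sInf {i | e ∈ newE D i}) ∧ sInf {i | e ∈ newE D i} < r := by
    intro e he
    obtain ⟨i, hi, hne⟩ := mem_mgE_iff.mp (hpath.1 e he)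
    have hne' : sInf {i | e ∈ newE D i} ∈ {i | e ∈ newE D i} :=
      Nat.sInf_mem ⟨i, hne⟩
    exact ⟨hne', lt_of_le_of_lt (Nat.sInf_le hne) hi⟩
  have hchain : l.Chain' (fun a b => sInf {i | a ∈ newE D i} < sInf {i | b ∈ newE D i}) :=
    chain'_imp_of_mem hpath.2
      (fun a ha b hb hr => step_lt hfr (hst a ha).2 (hst b hb).2 (hst a ha).1 (hst b hb).1 hr)
  have hpw : l.Pairwise (fun a b => sInf {i | a ∈ newE D i} < sInf {i | b ∈ newE D i}) :=
    (@List.isChain_iff_pairwise _ _ _ ⟨fun h1 h2 => h1.trans h2⟩).mp hchain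
  have hnodup : l.Nodup :=
    hpw.imp (fun {a b} h heq => absurd (heq ▸ h) (lt_irrefl _))
  -- pigeonhole
  obtain ⟨y, hy⟩ := list_pigeonhole hTfin.toFinset MEdge.sig l k hsig (by omega)
  rw [List.countP_eq_length_filter] at hy
  set es : List MEdge := (l.filter (fun e => decide (e.sig = y))).take k with hes
  have hsubl : es.Sublist l := (List.take_sublist _ _).trans List.filter_sublist
  have heslen : es.length = k := by
    rw [hes, List.length_take]
    omega
  have hesmem : ∀ e ∈ es, e.sig = y := by
    intro e he
    have := List.mem_of_mem_take he
    exact of_decide_eq_true (List.mem_filter.mp this).2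
  exact ⟨l, es, hpath, hsubl, heslen, hnodup.sublist hsubl,
    chain'_sig_of_const es y hesmem⟩


end StopChase
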